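/- Let a_1, ..., a_n (n ≥ 3) be real numbers and set b = a_1 + a_2 + ... + a_n. If b^2 = (n-1)(c + Σ a_i^2) for some real c, then 2 a_1 a_2 ≥ c, with equality if and only if a_1 + a_2 = a_3 = ... = a_n. -/
import Mathlib


/-- Chen's algebraic lemma (Chen 1993, Lemma 3.1). -/
theorem chen_algebraic_lemma (n : ℕ) (hn : 3 ≤ n) (a : Fin n → ℝ) (c : ℝ)
    (b : ℝ) (hb : b = ∑ i, a i)
    (h : b ^ 2 = ((n : ℝ) - 1) * (c + ∑ i, (a i) ^ 2)) :
    2 * a ⟨0, by omega⟩ * a ⟨1, by omega⟩ ≥ c ∧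
      (2 * a ⟨0, by omega⟩ * a ⟨1, by omega⟩ = c ↔
        ∀ i : Fin n, 2 ≤ (i : ℕ) → a i = a ⟨0, by omega⟩ + a ⟨1, by omega⟩) := by
  classical
  have h0 : 0 < n := by omega
  have h1 : 1 < n := by omega
  set i0 : Fin n := ⟨0, h0⟩ with hi0
  set i1 : Fin n := ⟨1, h1⟩ with hi1
  set s : Finset (Fin n) := Finset.univ.filter (fun i => 2 ≤ (i : ℕ)) with hs
  have hcompl : Finset.univ.filter (fun i : Fin n => ¬ 2 ≤ (i : ℕ)) = {i0, i1} := by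
    ext i
    simp only [Finset.mem_filter, Finset.mem_univ, true_and, Finset.mem_insert,
      Finset.mem_singleton, Fin.ext_iff, hi0, hi1]
    omega
  have hne : i0 ≠ i1 := by simp [hi0, hi1, Fin.ext_iff]
  have hsplit : ∀ f : Fin n → ℝ, ∑ i, f i = f i0 + f i1 + ∑ i ∈ s, f i := by
    intro f
    rw [← Finset.sum_filter_add_sum_filter_not Finset.univ (fun i : Fin n => 2 ≤ (i : ℕ)) f,
      hcompl, Finset.sum_pair hne, ← hs]
    ring
  have hcard : s.card + 2 = n := by
    have := Finset.card_filter_add_card_filter_not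
      (s := (Finset.univ : Finset (Fin n))) (p := fun i : Fin n => 2 ≤ (i : ℕ))
    rw [hcompl] at this
    simpa [← hs, Finset.card_pair hne] using this
  set A0 := a i0 with hA0
  set A1 := a i1 with hA1
  set S := ∑ i ∈ s, a i with hS
  set Q := ∑ i ∈ s, (a i) ^ 2 with hQ
  set m : ℝ := (s.card : ℝ) with hm
  have hm1 : (1 : ℝ) ≤ m := by
    rw [hm]
    exact_mod_cast Nat.one_le_iff_ne_zero.mpr (by omega)
  have hnm : (n : ℝ) - 1 = m + 1 := by
    have : ((s.card : ℝ) + 2) = (n : ℝ) := by exact_mod_cast hcard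
    rw [hm]; linarith
  have hE : (A0 + A1 + S) ^ 2 = (m + 1) * (c + (A0 ^ 2 + A1 ^ 2 + Q)) := by
    rw [hb, hsplit a] at h
    rw [hsplit (fun i => (a i) ^ 2)] at h
    rw [hnm] at h
    convert h using 2
  set T := ∑ i ∈ s, (A0 + A1 - a i) ^ 2 with hTdef
  have hT : T = m * (A0 + A1) ^ 2 - 2 * (A0 + A1) * S + Q := by
    rw [hTdef]
    have : ∀ i ∈ s, (A0 + A1 - a i) ^ 2
        = (A0 + A1) ^ 2 - 2 * (A0 + A1) * a i + (a i) ^ 2 := by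
      intro i _; ring
    rw [Finset.sum_congr rfl this, Finset.sum_add_distrib, Finset.sum_sub_distrib,
      Finset.sum_const, ← Finset.mul_sum, ← hS, ← hQ, nsmul_eq_mul, ← hm]
  have hCS : S ^ 2 ≤ m * Q := by
    have := sq_sum_le_card_mul_sum_sq (s := s) (f := a)
    rw [← hS, ← hQ] at this
    exact_mod_cast this
  have hTnonneg : 0 ≤ T := Finset.sum_nonneg fun i _ => sq_nonneg _
  have hkey : (m + 1) * (2 * A0 * A1 - c) = T + (m * Q - S ^ 2) := by
    rw [hT]
    nlinarith [hE]
  have hmpos : 0 < m + 1 := by linarith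
  constructor
  · nlinarith [hTnonneg, hCS, hkey, hmpos]
  · constructor
    · intro heq
      have hzero : T + (m * Q - S ^ 2) = 0 := by rw [← hkey, heq]; ring
      have hTzero : T = 0 := by linarith [hTnonneg, hCS, hzero]
      have := (Finset.sum_eq_zero_iff_of_nonneg
        (fun i _ => sq_nonneg (A0 + A1 - a i))).mp hTzero
      intro i hi
      have hmem : i ∈ s := by simp [hs, hi]
      have := this i hmem
      have := pow_eq_zero_iff (n := 2) (by norm_num) |>.mp this
      linarith [sub_eq_zero.mp this]
    · intro hall
      have hval : ∀ i ∈ s, a i = A0 + A1 := by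
        intro i hi
        exact hall i (by simpa [hs] using hi)
      have hSval : S = m * (A0 + A1) := by
        rw [hS, Finset.sum_congr rfl hval, Finset.sum_const, nsmul_eq_mul, ← hm]
      have hQval : Q = m * (A0 + A1) ^ 2 := by
        rw [hQ, Finset.sum_congr rfl (fun i hi => by rw [hval i hi]),
          Finset.sum_const, nsmul_eq_mul, ← hm]
      have hTzero : T = 0 := by
        rw [hT, hSval, hQval]; ring
      have : (m + 1) * (2 * A0 * A1 - c) = 0 := by
        rw [hkey, hTzero, hSval, hQval]; ring
      have := mul_eq_zero.mp this
      rcases this with h' | h'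
      · linarith
      · linarith
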